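/- Let m ≥ 1 be an integer. If y ∈ W^{1,2}(-1,1) satisfies ∫_{-1}^{1} t^k y(t) dt = 0 for k = 0,1,...,m-1, then |y(1)|^2 ≤ (2/(m(m+2))) · ∫_{-1}^{1} |y'(t)|^2 dt, and this constant is sharp. -/

import Mathlib

open Polynomial MeasureTheory intervalIntegral

namespace PAux

/-- iterated derivative of (X-a)^n * h keeps factor (X-a)^(n-k) -/
lemma factor_iterate (a : ℝ) (n : ℕ) (h : ℝ[X]) :
    ∀ k ≤ n, ∃ s : ℝ[X], derivative^[k] ((X - C a) ^ n * h) = (X - C a) ^ (n - k) * s := by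
  intro k
  induction k with
  | zero => intro _; exact ⟨h, by simp⟩
  | succ k ih =>
    intro hk
    obtain ⟨s, hs⟩ := ih (Nat.le_of_succ_le hk)
    refine ⟨C ((n - (k+1) : ℕ) : ℝ) * s + C 1 * s + (X - C a) * derivative s, ?_⟩
    rw [Function.iterate_succ_apply', hs]
    have h1 : n - k = (n - (k+1)) + 1 := by omega
    rw [h1]
    rw [derivative_mul, derivative_pow]
    simp only [derivative_sub, derivative_X, derivative_C, sub_zero, mul_one]
    push_cast
    simp only [C_add, C_1]
    ring

lemma eval_iterate_lt (a : ℝ) (n : ℕ) (h : ℝ[X]) {k : ℕ} (hk : k < n) :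
    eval a (derivative^[k] ((X - C a) ^ n * h)) = 0 := by
  obtain ⟨s, hs⟩ := factor_iterate a n h k hk.le
  rw [hs]
  have : n - k ≠ 0 := by omega
  simp [zero_pow this]

lemma key_deriv (a : ℝ) (n : ℕ) (h : ℝ[X]) :
    derivative ((X - C a) ^ (n+1) * h)
      = (X - C a) ^ n * (C ((n:ℝ)+1) * h + (X - C a) * derivative h) := by
  rw [derivative_mul, derivative_pow]
  simp only [derivative_sub, derivative_X, derivative_C, sub_zero, mul_one]
  push_cast
  simp only [C_add, C_1]
  ring

lemma eval_iterate_self (a : ℝ) : ∀ (n : ℕ) (h : ℝ[X]),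
    eval a (derivative^[n] ((X - C a) ^ n * h)) = (Nat.factorial n : ℝ) * eval a h := by
  intro n
  induction n with
  | zero => intro h; simp
  | succ n ih =>
    intro h
    rw [Function.iterate_succ_apply, key_deriv, ih]
    simp [Nat.factorial_succ, eval_add, eval_mul, eval_sub, eval_C, eval_X]
    ring

lemma eval_iterate_succ (a : ℝ) : ∀ (n : ℕ) (h : ℝ[X]),
    eval a (derivative^[n+1] ((X - C a) ^ n * h))
      = (Nat.factorial (n+1) : ℝ) * eval a (derivative h) := by
  intro n
  induction n with
  | zero => intro h; simp
  | succ n ih =>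
    intro h
    have h2 : (n:ℕ) + 1 + 1 = (n + 1) + 1 := rfl
    rw [h2, Function.iterate_succ_apply, key_deriv, ih]
    have hd : eval a (derivative (C ((n:ℝ)+1) * h + (X - C a) * derivative h))
        = ((n:ℝ)+2) * eval a (derivative h) := by
      simp only [derivative_add, derivative_mul, derivative_C, derivative_sub, derivative_X,
        derivative_one, zero_mul, zero_add, sub_zero, one_mul, eval_add, eval_mul, eval_C,
        eval_sub, eval_X, sub_self, zero_mul, mul_zero]
      ring
    rw [hd]
    simp [Nat.factorial_succ]
    ring


noncomputable def F (n : ℕ) : ℝ[X] := (X ^ 2 - C 1) ^ n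

lemma Ffac1 (n : ℕ) : F n = (X - C 1) ^ n * (X - C (-1)) ^ n := by
  rw [F, ← mul_pow]
  congr 1
  simp only [C_neg, C_1]
  ring

lemma Ffac2 (n : ℕ) : F n = (X - C (-1)) ^ n * (X - C 1) ^ n := by
  rw [Ffac1]; ring

-- continuity / integrability helpers
lemma contEval (p : ℝ[X]) : Continuous fun t : ℝ => eval t p := p.continuous

lemma intEval (p : ℝ[X]) : IntervalIntegrable (fun t => eval t p) volume (-1 : ℝ) 1 :=
  (contEval p).intervalIntegrable _ _

lemma intPoly (q : ℝ[X]) :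
    ∫ t in (-1:ℝ)..1, eval t (derivative q) = eval 1 q - eval (-1) q :=
  integral_eq_sub_of_hasDerivAt (fun t _ => q.hasDerivAt t) (intEval _)

lemma parts (u v : ℝ[X]) :
    ∫ t in (-1:ℝ)..1, eval t u * eval t (derivative v)
      = eval 1 u * eval 1 v - eval (-1) u * eval (-1) v
        - ∫ t in (-1:ℝ)..1, eval t (derivative u) * eval t v :=
  integral_mul_deriv_eq_deriv_mul (fun x _ => u.hasDerivAt x) (fun x _ => v.hasDerivAt x)
    (intEval _) (intEval _)


-- eval facts for F
lemma evalD_lt_one {n k : ℕ} (hk : k < n) : eval 1 (derivative^[k] (F n)) = 0 := by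
  rw [Ffac1]; exact eval_iterate_lt 1 n _ hk

lemma evalD_lt_negone {n k : ℕ} (hk : k < n) : eval (-1 : ℝ) (derivative^[k] (F n)) = 0 := by
  rw [Ffac2]; exact eval_iterate_lt (-1) n _ hk

lemma evalD_self_one (n : ℕ) :
    eval 1 (derivative^[n] (F n)) = (Nat.factorial n : ℝ) * 2 ^ n := by
  rw [Ffac1, eval_iterate_self]
  congr 1
  simp [eval_pow]
  norm_num

lemma evalD_self_negone (n : ℕ) :
    eval (-1 : ℝ) (derivative^[n] (F n)) = (Nat.factorial n : ℝ) * (-2) ^ n := by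
  rw [Ffac2, eval_iterate_self]
  congr 1
  simp [eval_pow]
  norm_num

lemma evalD_succ_one (n : ℕ) :
    eval 1 (derivative^[n+1] (F n)) = (Nat.factorial (n+1) : ℝ) * (n * 2 ^ (n-1)) := by
  rw [Ffac1, eval_iterate_succ]
  congr 1
  rw [derivative_pow]
  simp only [derivative_sub, derivative_X, derivative_C, sub_zero, mul_one, eval_mul, eval_C,
    eval_pow, eval_sub, eval_X, C_neg, C_1]
  norm_num

lemma evalD_succ_negone (n : ℕ) :
    eval (-1:ℝ) (derivative^[n+1] (F n)) = (Nat.factorial (n+1) : ℝ) * (n * (-2) ^ (n-1)) := by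
  rw [Ffac2, eval_iterate_succ]
  congr 1
  rw [derivative_pow]
  simp only [derivative_sub, derivative_X, derivative_C, sub_zero, mul_one, eval_mul, eval_C,
    eval_pow, eval_sub, eval_X, C_neg, C_1]
  norm_num

-- moments
lemma momentZero (n : ℕ) : ∀ i k : ℕ, i < k → k ≤ n →
    (∫ t in (-1:ℝ)..1, t ^ i * eval t (derivative^[k] (F n))) = 0 := by
  intro i
  induction i with
  | zero =>
    intro k hik hkn
    obtain ⟨k', rfl⟩ : ∃ k', k = k' + 1 := ⟨k - 1, by omega⟩
    have : (∫ t in (-1:ℝ)..1, t ^ 0 * eval t (derivative^[k'+1] (F n)))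
        = ∫ t in (-1:ℝ)..1, eval t (derivative (derivative^[k'] (F n))) := by
      rw [Function.iterate_succ_apply' derivative k' (F n)]
      simp
    rw [this, intPoly, evalD_lt_one (by omega), evalD_lt_negone (by omega), sub_zero]
  | succ i ih =>
    intro k hik hkn
    obtain ⟨k', rfl⟩ : ∃ k', k = k' + 1 := ⟨k - 1, by omega⟩
    have h1 : (∫ t in (-1:ℝ)..1, t ^ (i+1) * eval t (derivative^[k'+1] (F n)))
        = ∫ t in (-1:ℝ)..1, eval t (X^(i+1) : ℝ[X])
            * eval t (derivative (derivative^[k'] (F n))) := by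
      rw [Function.iterate_succ_apply' derivative k' (F n)]
      congr 1; funext t; simp
    rw [h1, parts, evalD_lt_one (by omega), evalD_lt_negone (by omega)]
    have h2 : (∫ t in (-1:ℝ)..1, eval t (derivative (X^(i+1) : ℝ[X]))
        * eval t (derivative^[k'] (F n)))
        = ((i:ℝ)+1) * ∫ t in (-1:ℝ)..1, t ^ i * eval t (derivative^[k'] (F n)) := by
      rw [← intervalIntegral.integral_const_mul]
      congr 1; funext t
      rw [derivative_X_pow]
      simp; ring
    rw [h2, ih k' (by omega) (by omega)]
    simp

lemma momentMain (n : ℕ) {j : ℕ} (hj : j ≤ n) :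
    (∫ t in (-1:ℝ)..1, t ^ j * eval t (derivative^[n+1] (F n)))
      = (1 - (-1:ℝ) ^ (j+n)) * (2 ^ n * Nat.factorial n) := by
  have h1 : (∫ t in (-1:ℝ)..1, t ^ j * eval t (derivative^[n+1] (F n)))
      = ∫ t in (-1:ℝ)..1, eval t (X^j : ℝ[X]) * eval t (derivative (derivative^[n] (F n))) := by
    rw [Function.iterate_succ_apply' derivative n (F n)]
    congr 1; funext t; simp
  rw [h1, parts, evalD_self_one, evalD_self_negone]
  have h2 : (∫ t in (-1:ℝ)..1, eval t (derivative (X^j : ℝ[X]))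
      * eval t (derivative^[n] (F n))) = 0 := by
    rcases Nat.eq_zero_or_pos j with hj0 | hj0
    · subst hj0; simp
    · have : (∫ t in (-1:ℝ)..1, eval t (derivative (X^j : ℝ[X]))
          * eval t (derivative^[n] (F n)))
          = ((j:ℝ)) * ∫ t in (-1:ℝ)..1, t ^ (j-1) * eval t (derivative^[n] (F n)) := by
        rw [← intervalIntegral.integral_const_mul]
        congr 1; funext t
        rw [derivative_X_pow]
        simp; ring
      rw [this, momentZero n (j-1) n (by omega) le_rfl, mul_zero]
  rw [h2, sub_zero]
  simp only [eval_pow, eval_X, one_pow, one_mul]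
  have hn2 : (-2:ℝ) ^ n = (-1:ℝ) ^ n * 2 ^ n := by rw [← neg_one_mul, mul_pow]
  rw [hn2, pow_add]
  ring

noncomputable def Pm (m : ℕ) : ℝ[X] :=
  C ((m : ℝ) / (2^(m+1) * (Nat.factorial (m+1)) * ((m:ℝ)*((m:ℝ)+1)*((m:ℝ)+2))))
      * derivative^[m+2] (F (m+1))
  + C (((m : ℝ)+2) / (2^m * (Nat.factorial m) * ((m:ℝ)*((m:ℝ)+1)*((m:ℝ)+2))))
      * derivative^[m+1] (F m)

noncomputable def aC (m : ℕ) : ℝ := 2 / ((m:ℝ)*((m:ℝ)+2))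
noncomputable def bC (m : ℕ) : ℝ := 2*(-1:ℝ)^(m+1) / ((m:ℝ)*((m:ℝ)+1)*((m:ℝ)+2))

lemma momPm (m : ℕ) (hm : 1 ≤ m) {j : ℕ} (hj : j ≤ m) :
    (∫ t in (-1:ℝ)..1, t ^ j * eval t (Pm m)) = aC m + bC m * (-1:ℝ)^j := by
  set c1 : ℝ := (m : ℝ) / (2^(m+1) * (Nat.factorial (m+1)) * ((m:ℝ)*((m:ℝ)+1)*((m:ℝ)+2))) with hc1
  set c2 : ℝ := ((m : ℝ)+2) / (2^m * (Nat.factorial m) * ((m:ℝ)*((m:ℝ)+1)*((m:ℝ)+2))) with hc2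
  have hsplit : (fun t => t ^ j * eval t (Pm m))
      = fun t => c1 * (t ^ j * eval t (derivative^[m+2] (F (m+1))))
          + c2 * (t ^ j * eval t (derivative^[m+1] (F m))) := by
    funext t
    simp only [Pm, eval_add, eval_mul, eval_C]
    ring
  rw [hsplit, intervalIntegral.integral_add
      (f := fun t => c1 * (t ^ j * eval t (derivative^[m+2] (F (m+1)))))
      (g := fun t => c2 * (t ^ j * eval t (derivative^[m+1] (F m))))
      ((continuous_const.mul ((continuous_pow j).mul (contEval _))).intervalIntegrable _ _)
      ((continuous_const.mul ((continuous_pow j).mul (contEval _))).intervalIntegrable _ _),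
    intervalIntegral.integral_const_mul, intervalIntegral.integral_const_mul]
  have e1 : (m+1) + 1 = (m+1) + 1 := rfl
  rw [momentMain (m+1) (le_trans hj (Nat.le_succ m)), momentMain m hj]
  have hm0 : (m:ℝ) ≠ 0 := by positivity
  have hm1 : (m:ℝ) + 1 ≠ 0 := by positivity
  have hm2 : (m:ℝ) + 2 ≠ 0 := by positivity
  have hf1 : ((Nat.factorial (m+1) : ℝ)) ≠ 0 := by positivity
  have hf2 : ((Nat.factorial m : ℝ)) ≠ 0 := by positivity
  have hp1 : (2:ℝ)^(m+1) ≠ 0 := by positivity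
  have hp2 : (2:ℝ)^m ≠ 0 := by positivity
  rw [hc1, hc2, aC, bC]
  simp only [pow_add, pow_succ, pow_one]
  field_simp
  ring

lemma evalPm_one (m : ℕ) (hm : 1 ≤ m) : eval 1 (Pm m) = 1 := by
  simp only [Pm, eval_add, eval_mul, eval_C]
  rw [evalD_succ_one (m+1), evalD_succ_one m]
  have h2m : (2:ℝ)^m = 2 * 2^(m-1) := by
    rw [← pow_succ']; congr 1; omega
  have hm0 : (m:ℝ) ≠ 0 := by positivity
  have hm1 : (m:ℝ) + 1 ≠ 0 := by positivity
  have hm2 : (m:ℝ) + 2 ≠ 0 := by positivity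
  have hf1 : ((Nat.factorial (m+1) : ℝ)) ≠ 0 := by positivity
  have hf2 : ((Nat.factorial m : ℝ)) ≠ 0 := by positivity
  have hp2 : (2:ℝ)^(m-1) ≠ 0 := by positivity
  have hfs1 : ((Nat.factorial (m+1+1) : ℝ)) = ((m:ℝ)+2) * (Nat.factorial (m+1) : ℝ) := by
    rw [Nat.factorial_succ]; push_cast; ring
  have hfs2 : ((Nat.factorial (m+1) : ℝ)) = ((m:ℝ)+1) * (Nat.factorial m : ℝ) := by
    rw [Nat.factorial_succ]; push_cast; ring
  have hsim : ((m+1 : ℕ) : ℝ) = (m:ℝ) + 1 := by push_cast; ring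
  rw [hfs1, hsim, h2m]
  simp only [pow_add, pow_succ, pow_one]
  rw [hfs2]
  field_simp
  ring
  rw [show 1 + m - 1 = m by omega]; ring

lemma evalPm_negone (m : ℕ) (hm : 1 ≤ m) : eval (-1:ℝ) (Pm m) = 0 := by
  simp only [Pm, eval_add, eval_mul, eval_C]
  rw [evalD_succ_negone (m+1), evalD_succ_negone m]
  have h2m : (-2:ℝ)^m = (-2) * (-2)^(m-1) := by
    rw [← pow_succ']; congr 1; omega
  have hm0 : (m:ℝ) ≠ 0 := by positivity
  have hm1 : (m:ℝ) + 1 ≠ 0 := by positivity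
  have hm2 : (m:ℝ) + 2 ≠ 0 := by positivity
  have hf1 : ((Nat.factorial (m+1) : ℝ)) ≠ 0 := by positivity
  have hf2 : ((Nat.factorial m : ℝ)) ≠ 0 := by positivity
  have hfs1 : ((Nat.factorial (m+1+1) : ℝ)) = ((m:ℝ)+2) * (Nat.factorial (m+1) : ℝ) := by
    rw [Nat.factorial_succ]; push_cast; ring
  have hfs2 : ((Nat.factorial (m+1) : ℝ)) = ((m:ℝ)+1) * (Nat.factorial m : ℝ) := by
    rw [Nat.factorial_succ]; push_cast; ring
  have hsim : ((m+1 : ℕ) : ℝ) = (m:ℝ) + 1 := by push_cast; ring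
  have hp2 : (2:ℝ)^(m-1) ≠ 0 := by positivity
  simp only [Nat.add_sub_cancel]
  have h2m' : (2:ℝ)^m = 2 * 2^(m-1) := by rw [← pow_succ']; congr 1; omega
  have h2a : (2:ℝ)^(m+1) = 2 * (2 * 2^(m-1)) := by rw [pow_succ]; rw [h2m']; ring
  rw [hfs1, hsim, h2m, h2a, h2m', hfs2]
  field_simp
  ring

lemma degPm (m : ℕ) : natDegree (Pm m) ≤ m := by
  have hF : ∀ n : ℕ, natDegree (F n) ≤ 2 * n := by
    intro n
    refine le_trans (natDegree_pow_le) ?_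
    have : natDegree (X^2 - C (1:ℝ)) ≤ 2 :=
      le_trans (natDegree_sub_le _ _) (by simp [natDegree_X_pow])
    calc n * natDegree (X^2 - C (1:ℝ)) ≤ n * 2 := Nat.mul_le_mul_left n this
    _ = 2 * n := by ring
  have h1 : natDegree (derivative^[m+2] (F (m+1))) ≤ m := by
    refine le_trans (natDegree_iterate_derivative _ _) ?_
    have := hF (m+1); omega
  have h2 : natDegree (derivative^[m+1] (F m)) ≤ m := by
    refine le_trans (natDegree_iterate_derivative _ _) ?_
    have := hF m; omega
  refine le_trans (natDegree_add_le _ _) ?_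
  simp only [max_le_iff]
  exact ⟨le_trans (natDegree_C_mul_le _ _) h1, le_trans (natDegree_C_mul_le _ _) h2⟩

lemma intQPm (m : ℕ) (hm : 1 ≤ m) (q : ℝ[X]) (hq : natDegree q < m + 1) :
    (∫ t in (-1:ℝ)..1, eval t q * eval t (Pm m))
      = aC m * eval 1 q + bC m * eval (-1:ℝ) q := by
  have hrep : ∀ t : ℝ, eval t q = ∑ j ∈ Finset.range (m+1), q.coeff j * t ^ j :=
    fun t => eval_eq_sum_range' hq t
  have hint : (fun t : ℝ => eval t q * eval t (Pm m))
      = fun t => ∑ j ∈ Finset.range (m+1), q.coeff j * (t ^ j * eval t (Pm m)) := by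
    funext t
    rw [hrep t, Finset.sum_mul]
    congr 1; funext j; ring
  rw [hint, intervalIntegral.integral_finset_sum]
  · have : ∀ j ∈ Finset.range (m+1),
        (∫ t in (-1:ℝ)..1, q.coeff j * (t ^ j * eval t (Pm m)))
          = q.coeff j * (aC m + bC m * (-1:ℝ)^j) := by
      intro j hj
      rw [intervalIntegral.integral_const_mul, momPm m hm (Nat.lt_succ_iff.mp (Finset.mem_range.mp hj))]
    rw [Finset.sum_congr rfl this]
    have h1 : eval (1:ℝ) q = ∑ j ∈ Finset.range (m+1), q.coeff j * (1:ℝ) ^ j := hrep 1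
    have h2 : eval (-1:ℝ) q = ∑ j ∈ Finset.range (m+1), q.coeff j * (-1:ℝ) ^ j := hrep (-1)
    rw [h1, h2, Finset.mul_sum, Finset.mul_sum, ← Finset.sum_add_distrib]
    congr 1; funext j; ring
  · intro j hj
    exact (continuous_const.mul ((continuous_pow j).mul (contEval _))).intervalIntegrable _ _

lemma sqPm (m : ℕ) (hm : 1 ≤ m) :
    (∫ t in (-1:ℝ)..1, eval t (Pm m) * eval t (Pm m)) = aC m := by
  rw [intQPm m hm (Pm m) (Nat.lt_succ_of_le (degPm m)), evalPm_one m hm, evalPm_negone m hm]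
  ring

open Set in
lemma fubini_primitive (g : ℝ → ℝ) (hg : IntervalIntegrable g volume (-1 : ℝ) 1) (p : ℝ[X]) :
    (∫ s in (-1:ℝ)..1, g s * (∫ t in (-1:ℝ)..s, eval t p))
      = ∫ t in (-1:ℝ)..1, eval t p * (∫ s in t..1, g s) := by
  have h11 : (-1:ℝ) ≤ 1 := by norm_num
  set μ := volume.restrict (Ioc (-1:ℝ) 1) with hμ
  have hgi : Integrable g μ := (intervalIntegrable_iff_integrableOn_Ioc_of_le h11).mp hg
  have hpi : Integrable (fun t => eval t p) μ := (contEval p).integrableOn_Ioc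
  set f : ℝ → ℝ → ℝ := fun x y => (Iic x).indicator (fun y => g x * eval y p) y with hf
  have hΦ : Integrable (Function.uncurry f) (μ.prod μ) := by
    have h1 : Integrable (fun z : ℝ × ℝ => g z.1 * eval z.2 p) (μ.prod μ) :=
      hgi.mul_prod hpi
    have h2 : MeasurableSet {z : ℝ × ℝ | z.2 ≤ z.1} :=
      measurableSet_le measurable_snd measurable_fst
    have : Function.uncurry f
        = ({z : ℝ × ℝ | z.2 ≤ z.1}).indicator (fun z => g z.1 * eval z.2 p) := by
      funext z
      simp only [Function.uncurry, hf, Set.indicator_apply, Set.mem_Iic, Set.mem_setOf_eq]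
    rw [this]
    exact h1.indicator h2
  have hswap : (∫ x, ∫ y, f x y ∂μ ∂μ) = ∫ y, ∫ x, f x y ∂μ ∂μ :=
    integral_integral_swap hΦ
  -- left side
  have hL : (∫ x, ∫ y, f x y ∂μ ∂μ) = ∫ s in (-1:ℝ)..1, g s * (∫ t in (-1:ℝ)..s, eval t p) := by
    rw [intervalIntegral.integral_of_le h11]
    refine integral_congr_ae ?_
    filter_upwards [self_mem_ae_restrict (measurableSet_Ioc : MeasurableSet (Ioc (-1:ℝ) 1))]
      with x hx
    rw [hf]
    rw [MeasureTheory.integral_indicator measurableSet_Iic, hμ, Measure.restrict_restrict measurableSet_Iic]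
    have hset : Iic x ∩ Ioc (-1:ℝ) 1 = Ioc (-1:ℝ) x := by
      rw [Set.inter_comm, Set.Ioc_inter_Iic, min_eq_right hx.2]
    rw [hset, MeasureTheory.integral_const_mul, ← intervalIntegral.integral_of_le hx.1.le]
  -- right side
  have hR : (∫ y, ∫ x, f x y ∂μ ∂μ) = ∫ t in (-1:ℝ)..1, eval t p * (∫ s in t..1, g s) := by
    rw [intervalIntegral.integral_of_le h11]
    refine integral_congr_ae ?_
    filter_upwards [self_mem_ae_restrict (measurableSet_Ioc : MeasurableSet (Ioc (-1:ℝ) 1))]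
      with y hy
    have hfy : ∀ x : ℝ, f x y = (Ici y).indicator (fun x => g x * eval y p) x := by
      intro x
      simp only [hf, Set.indicator_apply, Set.mem_Iic, Set.mem_Ici]
    simp only [hfy]
    rw [MeasureTheory.integral_indicator measurableSet_Ici, hμ, Measure.restrict_restrict measurableSet_Ici]
    have hset : Ici y ∩ Ioc (-1:ℝ) 1 = Icc y 1 := by
      ext u
      simp only [Set.mem_inter_iff, Set.mem_Ici, Set.mem_Ioc, Set.mem_Icc]
      constructor
      · rintro ⟨h1, _, h3⟩; exact ⟨h1, h3⟩
      · rintro ⟨h1, h2⟩; exact ⟨h1, lt_of_lt_of_le hy.1 h1, h2⟩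
    rw [hset, MeasureTheory.integral_Icc_eq_integral_Ioc, MeasureTheory.integral_mul_const,
      ← intervalIntegral.integral_of_le hy.2, mul_comm]
  rw [← hL, hswap, hR]

lemma intPoly' (a b : ℝ) (q : ℝ[X]) :
    ∫ t in a..b, eval t (derivative q) = eval b q - eval a q :=
  integral_eq_sub_of_hasDerivAt (fun t _ => q.hasDerivAt t)
    ((contEval _).intervalIntegrable _ _)

/-- Cauchy-Schwarz via discriminant -/
lemma cs_aux {A Bv Cc : ℝ} (hA : 0 ≤ A) (h : ∀ lam : ℝ, 0 ≤ Cc - 2*lam*Bv + lam^2*A) :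
    Bv^2 ≤ A * Cc := by
  rcases eq_or_lt_of_le hA with hA0 | hA0
  · rcases eq_or_ne Bv 0 with hB | hB
    · have := h 0; nlinarith
    · have h1 := h ((Cc + 1) / (2*Bv))
      rw [← hA0] at h1
      have h2 : 2 * ((Cc+1)/(2*Bv)) * Bv = Cc + 1 := by
        field_simp
      nlinarith [h 0]
  · have h1 := h (Bv / A)
    have h2 : Bv / A * Bv = Bv^2 / A := by ring
    have h3 : (Bv/A)^2 * A = Bv^2/A := by
      field_simp
    have h4 : 0 ≤ Cc - Bv^2/A := by
      have := h (Bv / A)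
      calc (0:ℝ) ≤ Cc - 2*(Bv/A)*Bv + (Bv/A)^2*A := this
      _ = Cc - Bv^2/A := by field_simp; ring
    have h5 : Bv^2/A ≤ Cc := by linarith
    calc Bv^2 = (Bv^2/A) * A := by field_simp
    _ ≤ Cc * A := mul_le_mul_of_nonneg_right h5 hA
    _ = A * Cc := mul_comm _ _

lemma key_repr (m : ℕ) (hm : 1 ≤ m) (y g : ℝ → ℝ)
    (hgint : IntervalIntegrable g volume (-1 : ℝ) 1)
    (hy : ∀ t ∈ Set.Icc (-1:ℝ) 1, y t = y (-1) + ∫ s in (-1:ℝ)..t, g s)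
    (hmom : ∀ k < m, (∫ t in (-1:ℝ)..1, t ^ k * y t) = 0) :
    y 1 = ∫ t in (-1:ℝ)..1, g t * eval t (Pm m) := by
  have huIcc : Set.uIcc (-1:ℝ) 1 = Set.Icc (-1:ℝ) 1 := Set.uIcc_of_le (by norm_num)
  set G : ℝ → ℝ := fun t => ∫ s in (-1:ℝ)..t, g s with hG
  have hGcont : ContinuousOn G (Set.Icc (-1:ℝ) 1) := by
    rw [← huIcc]
    exact intervalIntegral.continuousOn_primitive_interval' hgint Set.left_mem_uIcc
  set pf : ℝ → ℝ := fun t => eval t (derivative (Pm m)) with hpf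
  have hpfc : Continuous pf := contEval _
  -- primitive of pf is eval Pm
  have hprim : ∀ s : ℝ, (∫ t in (-1:ℝ)..s, pf t) = eval s (Pm m) := by
    intro s
    rw [hpf]
    rw [intPoly', evalPm_negone m hm, sub_zero]
  -- Fubini
  have hfub := fubini_primitive g hgint (derivative (Pm m))
  have hprim' : ∀ s : ℝ, (∫ t in (-1:ℝ)..s, eval t (derivative (Pm m))) = eval s (Pm m) := hprim
  simp only [hprim'] at hfub
  change _ = ∫ t in (-1:ℝ)..1, pf t * (∫ s in t..1, g s) at hfub
  -- rewrite tail integral of g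
  have htail : ∀ t ∈ Set.uIcc (-1:ℝ) 1, (∫ s in t..1, g s) = G 1 - G t := by
    intro t ht
    have hsub : Set.uIcc (-1:ℝ) t ⊆ Set.uIcc (-1:ℝ) 1 :=
      Set.uIcc_subset_uIcc Set.left_mem_uIcc ht
    simp only [hG]
    exact (intervalIntegral.integral_interval_sub_left hgint (hgint.mono_set hsub)).symm
  have hstep : (∫ t in (-1:ℝ)..1, pf t * (∫ s in t..1, g s))
      = ∫ t in (-1:ℝ)..1, pf t * (G 1 - G t) := by
    apply intervalIntegral.integral_congr
    intro t ht
    simp only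
    rw [htail t ht]
  rw [hstep] at hfub
  -- integral of pf
  have hintpf : (∫ t in (-1:ℝ)..1, pf t) = 1 := by
    rw [hpf, intPoly', evalPm_one m hm, evalPm_negone m hm, sub_zero]
  -- integrability facts
  have hpfG : IntervalIntegrable (fun t => pf t * G t) volume (-1:ℝ) 1 := by
    apply ContinuousOn.intervalIntegrable
    rw [huIcc]
    exact (hpfc.continuousOn).mul hGcont
  -- split
  have hsplit : (∫ t in (-1:ℝ)..1, pf t * (G 1 - G t))
      = G 1 * (∫ t in (-1:ℝ)..1, pf t) - ∫ t in (-1:ℝ)..1, pf t * G t := by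
    have : (fun t => pf t * (G 1 - G t)) = fun t => G 1 * pf t - pf t * G t := by
      funext t; ring
    rw [this, intervalIntegral.integral_sub
      ((hpfc.intervalIntegrable _ _).const_mul _) hpfG,
      intervalIntegral.integral_const_mul]
  rw [hsplit] at hfub
  -- moments kill pf * y
  have hdeg : natDegree (derivative (Pm m)) < m := by
    have h1 := natDegree_derivative_le (Pm m)
    have h2 := degPm m
    omega
  set ytil : ℝ → ℝ := fun t => y (-1) + G t with hyt
  have hyeq : ∀ t ∈ Set.Icc (-1:ℝ) 1, y t = ytil t := by
    intro t ht; rw [hyt]; exact hy t ht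
  have hytc : ContinuousOn ytil (Set.Icc (-1:ℝ) 1) := continuousOn_const.add hGcont
  have hmom' : ∀ k < m, (∫ t in (-1:ℝ)..1, t ^ k * ytil t) = 0 := by
    intro k hk
    rw [← hmom k hk]
    apply intervalIntegral.integral_congr
    intro t ht
    rw [huIcc] at ht
    simp only [hyeq t ht]
  have hpfy : (∫ t in (-1:ℝ)..1, pf t * ytil t) = 0 := by
    have hrep : ∀ t : ℝ, pf t = ∑ k ∈ Finset.range m, (derivative (Pm m)).coeff k * t ^ k :=
      fun t => eval_eq_sum_range' hdeg t
    have hfun : (fun t => pf t * ytil t)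
        = fun t => ∑ k ∈ Finset.range m, (derivative (Pm m)).coeff k * (t ^ k * ytil t) := by
      funext t
      rw [hrep t, Finset.sum_mul]
      congr 1; funext k; ring
    rw [hfun, intervalIntegral.integral_finset_sum]
    · refine Finset.sum_eq_zero ?_
      intro k hk
      rw [intervalIntegral.integral_const_mul, hmom' k (Finset.mem_range.mp hk), mul_zero]
    · intro k _
      apply IntervalIntegrable.const_mul
      apply ContinuousOn.intervalIntegrable
      rw [huIcc]
      exact (continuous_pow k).continuousOn.mul hytc
  -- compute ∫ pf * G
  have hpfGval : (∫ t in (-1:ℝ)..1, pf t * G t) = - y (-1) := by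
    have : (∫ t in (-1:ℝ)..1, pf t * ytil t)
        = (∫ t in (-1:ℝ)..1, pf t * G t) + y (-1) * ∫ t in (-1:ℝ)..1, pf t := by
      rw [← intervalIntegral.integral_const_mul, ← intervalIntegral.integral_add hpfG
        ((hpfc.intervalIntegrable _ _).const_mul _)]
      congr 1; funext t; rw [hyt]; ring
    rw [hpfy, hintpf] at this
    linarith
  rw [hintpf, hpfGval] at hfub
  have hy1 : y 1 = y (-1) + G 1 := hy 1 (by norm_num)
  rw [hfub, hy1]
  ring

lemma integral_sq_nonneg (h : ℝ → ℝ) : 0 ≤ ∫ t in (-1:ℝ)..1, (h t)^2 :=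
  intervalIntegral.integral_nonneg (by norm_num) (fun u _ => sq_nonneg _)

lemma forward_bound (m : ℕ) (hm : 1 ≤ m) (y g : ℝ → ℝ)
    (hg1 : IntervalIntegrable g volume (-1 : ℝ) 1)
    (hg2 : IntervalIntegrable (fun t => (g t)^2) volume (-1 : ℝ) 1)
    (hy : ∀ t ∈ Set.Icc (-1:ℝ) 1, y t = y (-1) + ∫ s in (-1:ℝ)..t, g s)
    (hmom : ∀ k < m, (∫ t in (-1:ℝ)..1, t ^ k * y t) = 0) :
    (y 1)^2 ≤ 2 / ((m:ℝ) * ((m:ℝ) + 2)) * ∫ t in (-1:ℝ)..1, (g t)^2 := by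
  set Pev : ℝ → ℝ := fun t => eval t (Pm m) with hPev
  set A : ℝ := ∫ t in (-1:ℝ)..1, (g t)^2 with hA
  set Bv : ℝ := ∫ t in (-1:ℝ)..1, g t * Pev t with hBv
  have hArep : y 1 = Bv := key_repr m hm y g hg1 hy hmom
  have hCc : (∫ t in (-1:ℝ)..1, Pev t * Pev t) = aC m := sqPm m hm
  have hAnn : 0 ≤ A := integral_sq_nonneg g
  have hint1 : IntervalIntegrable (fun t => Pev t * Pev t) volume (-1:ℝ) 1 :=
    (((contEval _).mul (contEval _)).intervalIntegrable _ _)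
  have hint2 : IntervalIntegrable (fun t => g t * Pev t) volume (-1:ℝ) 1 :=
    hg1.mul_continuousOn (contEval _).continuousOn
  have hlam : ∀ lam : ℝ, 0 ≤ aC m - 2*lam*Bv + lam^2*A := by
    intro lam
    have h0 : 0 ≤ ∫ t in (-1:ℝ)..1, (Pev t - lam * g t)^2 := integral_sq_nonneg _
    have hexp : (∫ t in (-1:ℝ)..1, (Pev t - lam * g t)^2)
        = (∫ t in (-1:ℝ)..1, Pev t * Pev t)
          + (((-2*lam) * ∫ t in (-1:ℝ)..1, g t * Pev t)
            + lam^2 * ∫ t in (-1:ℝ)..1, (g t)^2) := by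
      rw [← intervalIntegral.integral_const_mul, ← intervalIntegral.integral_const_mul,
        ← intervalIntegral.integral_add (hint2.const_mul _) (hg2.const_mul _),
        ← intervalIntegral.integral_add hint1 ((hint2.const_mul _).add (hg2.const_mul _))]
      congr 1; funext t; ring
    rw [hexp, hCc] at h0
    calc (0:ℝ) ≤ aC m + ((-2*lam) * Bv + lam^2 * A) := h0
    _ = aC m - 2*lam*Bv + lam^2*A := by ring
  have hcs := cs_aux hAnn hlam
  have haC : aC m = 2 / ((m:ℝ) * ((m:ℝ) + 2)) := rfl
  calc (y 1)^2 = Bv^2 := by rw [hArep]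
  _ ≤ A * aC m := hcs
  _ = 2 / ((m:ℝ) * ((m:ℝ) + 2)) * A := by rw [haC]; ring

lemma intPm_total (m : ℕ) (hm : 1 ≤ m) :
    (∫ s in (-1:ℝ)..1, eval s (Pm m)) = aC m + bC m := by
  have := momPm m hm (Nat.zero_le m)
  simpa using this

noncomputable def yE (m : ℕ) : ℝ → ℝ := fun t => -(bC m) + ∫ s in (-1:ℝ)..t, eval s (Pm m)

lemma yE_negone (m : ℕ) : yE m (-1) = -(bC m) := by
  simp [yE]

lemma yE_one (m : ℕ) (hm : 1 ≤ m) : yE m 1 = aC m := by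
  rw [yE, intPm_total m hm]; ring

lemma yE_hasDeriv (m : ℕ) (x : ℝ) : HasDerivAt (yE m) (eval x (Pm m)) x := by
  have h : HasDerivAt (fun t => ∫ s in (-1:ℝ)..t, eval s (Pm m)) (eval x (Pm m)) x :=
    intervalIntegral.integral_hasDerivAt_right ((contEval _).intervalIntegrable _ _)
      ((contEval _).stronglyMeasurableAtFilter _ _) (contEval _).continuousAt
  exact h.const_add (-(bC m))

lemma yE_moment (m : ℕ) (hm : 1 ≤ m) {k : ℕ} (hk : k < m) :
    (∫ t in (-1:ℝ)..1, t ^ k * yE m t) = 0 := by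
  have hk1 : (k:ℝ) + 1 ≠ 0 := by positivity
  have hv : ∀ x : ℝ, HasDerivAt (fun t => t^(k+1)/((k:ℝ)+1)) (x^k) x := by
    intro x
    have h1 := (hasDerivAt_pow (k+1) x).div_const ((k:ℝ)+1)
    have h2 : ((k:ℝ)+1) * x^(k+1-1) / ((k:ℝ)+1) = x^k := by
      field_simp
      simp
    rw [Nat.cast_add, Nat.cast_one] at h1
    rwa [h2] at h1
  have hparts := intervalIntegral.integral_mul_deriv_eq_deriv_mul
    (a := (-1:ℝ)) (b := (1:ℝ)) (u := yE m) (u' := fun t => eval t (Pm m))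
    (v := fun t => t^(k+1)/((k:ℝ)+1)) (v' := fun t => t^k)
    (fun x _ => yE_hasDeriv m x) (fun x _ => hv x)
    ((contEval _).intervalIntegrable _ _)
    ((continuous_pow k).intervalIntegrable _ _)
  have hflip : (∫ t in (-1:ℝ)..1, t ^ k * yE m t)
      = ∫ t in (-1:ℝ)..1, yE m t * t ^ k := by
    congr 1; funext t; ring
  have hPint : (∫ t in (-1:ℝ)..1, eval t (Pm m) * (t^(k+1)/((k:ℝ)+1)))
      = (aC m + bC m * (-1:ℝ)^(k+1)) / ((k:ℝ)+1) := by
    have h1 : (fun t : ℝ => eval t (Pm m) * (t^(k+1)/((k:ℝ)+1)))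
        = fun t : ℝ => (1/((k:ℝ)+1)) * (t^(k+1) * eval t (Pm m)) := by
      funext t; field_simp
    rw [h1, intervalIntegral.integral_const_mul, momPm m hm (by omega : k+1 ≤ m)]
    field_simp
  rw [hflip, hparts, hPint, yE_one m hm, yE_negone m]
  field_simp
  ring

end PAux

/-- `W12 y g` : `y` is absolutely continuous on `[-1,1]` with derivative `g ∈ L²(-1,1)`. -/
def W12 (y g : ℝ → ℝ) : Prop :=
  IntervalIntegrable g MeasureTheory.volume (-1) 1 ∧
  IntervalIntegrable (fun t => g t ^ 2) MeasureTheory.volume (-1) 1 ∧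
  ∀ t ∈ Set.Icc (-1 : ℝ) 1, y t = y (-1) + ∫ s in (-1 : ℝ)..t, g s

theorem poincare_at_one (m : ℕ) (hm : 1 ≤ m) :
    (∀ y g : ℝ → ℝ, W12 y g →
      (∀ k < m, (∫ t in (-1:ℝ)..1, t ^ k * y t) = 0) →
      (y 1) ^ 2 ≤ 2 / (m * (m + 2)) * ∫ t in (-1:ℝ)..1, (g t) ^ 2) ∧
    (∀ B : ℝ,
      (∀ y g : ℝ → ℝ, W12 y g →
        (∀ k < m, (∫ t in (-1:ℝ)..1, t ^ k * y t) = 0) →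
        (y 1) ^ 2 ≤ B * ∫ t in (-1:ℝ)..1, (g t) ^ 2) →
      2 / (m * (m + 2)) ≤ B) := by
  constructor
  · intro y g hW hmom
    exact PAux.forward_bound m hm y g hW.1 hW.2.1 hW.2.2 hmom
  · intro B hB
    have hmpos : (0:ℝ) < m := by exact_mod_cast hm
    have haCpos : 0 < PAux.aC m := by
      rw [PAux.aC]
      exact div_pos two_pos (mul_pos hmpos (by linarith))
    have hW : W12 (PAux.yE m) (fun t => Polynomial.eval t (PAux.Pm m)) := by
      refine ⟨(PAux.contEval _).intervalIntegrable _ _,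
        ((PAux.contEval _).pow 2).intervalIntegrable _ _, ?_⟩
      intro t _
      rw [PAux.yE_negone]
      rfl
    have hmom : ∀ k < m, (∫ t in (-1:ℝ)..1, t ^ k * PAux.yE m t) = 0 :=
      fun k hk => PAux.yE_moment m hm hk
    have hineq := hB (PAux.yE m) _ hW hmom
    have hsq : (∫ t in (-1:ℝ)..1, (Polynomial.eval t (PAux.Pm m))^2) = PAux.aC m := by
      rw [← PAux.sqPm m hm]
      congr 1; funext t; ring
    rw [hsq, PAux.yE_one m hm] at hineq
    have : PAux.aC m ≤ B := by nlinarith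
    calc 2 / ((m:ℝ) * ((m:ℝ) + 2)) = PAux.aC m := rfl
    _ ≤ B := this
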